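/- A tower of rings A|B|C is right depth three if and only if P = (A ⊗_B A)^C is finitely generated projective as a left module over V = A^C and the map A ⊗_V P → A ⊗_B A given by a ⊗ p ↦ ap¹ ⊗_B p² is an isomorphism of A-C-bimodules. -/

import Mathlib

open scoped BigOperators

section BTCore

variable {R M N P : Type*} [AddCommGroup M] [AddCommGroup N] [AddCommGroup P]

/-- Relations defining the balanced tensor product of `M` and `N` over the
"scalars" `R`, where `R` acts on the right of `M` via `rho` and on the left of
`N` via `lam`. -/
inductive BTRel (rho : R → M →+ M) (lam : R → N →+ N) :
    FreeAbelianGroup (M × N) → FreeAbelianGroup (M × N) → Prop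
  | addl (m m' : M) (n : N) :
      BTRel rho lam (FreeAbelianGroup.of (m + m', n))
        (FreeAbelianGroup.of (m, n) + FreeAbelianGroup.of (m', n))
  | addr (m : M) (n n' : N) :
      BTRel rho lam (FreeAbelianGroup.of (m, n + n'))
        (FreeAbelianGroup.of (m, n) + FreeAbelianGroup.of (m, n'))
  | bal (r : R) (m : M) (n : N) :
      BTRel rho lam (FreeAbelianGroup.of (rho r m, n))
        (FreeAbelianGroup.of (m, lam r n))

/-- The balanced tensor product `M ⊗_R N`. -/
def BT (rho : R → M →+ M) (lam : R → N →+ N) : Type _ :=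
  (addConGen (BTRel rho lam)).Quotient

namespace BT

variable {rho : R → M →+ M} {lam : R → N →+ N}

instance : AddGroup (BT rho lam) :=
  inferInstanceAs (AddGroup (addConGen (BTRel rho lam)).Quotient)

instance : AddCommGroup (BT rho lam) :=
  { (inferInstance : AddGroup (BT rho lam)) with
    add_comm := fun a b => by
      refine AddCon.induction_on₂ a b fun x y => ?_
      change ((x + y : FreeAbelianGroup (M × N)) :
        (addConGen (BTRel rho lam)).Quotient) = ((y + x : FreeAbelianGroup (M × N)) : _)
      rw [add_comm] }

/-- The canonical generator `m ⊗ n`. -/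
def mk (rho : R → M →+ M) (lam : R → N →+ N) (m : M) (n : N) : BT rho lam :=
  ((FreeAbelianGroup.of (m, n) : FreeAbelianGroup (M × N)) :
    (addConGen (BTRel rho lam)).Quotient)

lemma mk_rel {x y : FreeAbelianGroup (M × N)} (h : BTRel rho lam x y) :
    (x : (addConGen (BTRel rho lam)).Quotient) = (y : _) :=
  (AddCon.eq _).2 (AddConGen.Rel.of _ _ h)

lemma mk_add_left (m m' : M) (n : N) :
    mk rho lam (m + m') n = mk rho lam m n + mk rho lam m' n := by
  have := mk_rel (BTRel.addl m m' n (rho := rho) (lam := lam))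
  exact this

lemma mk_add_right (m : M) (n n' : N) :
    mk rho lam m (n + n') = mk rho lam m n + mk rho lam m n' := by
  have := mk_rel (BTRel.addr m n n' (rho := rho) (lam := lam))
  exact this

lemma mk_bal (r : R) (m : M) (n : N) :
    mk rho lam (rho r m) n = mk rho lam m (lam r n) :=
  mk_rel (BTRel.bal r m n)

/-- Lift a biadditive balanced map to the balanced tensor product. -/
def lift (rho : R → M →+ M) (lam : R → N →+ N) (φ : M → N → P)
    (h1 : ∀ m m' n, φ (m + m') n = φ m n + φ m' n)
    (h2 : ∀ m n n', φ m (n + n') = φ m n + φ m n')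
    (h3 : ∀ r m n, φ (rho r m) n = φ m (lam r n)) : BT rho lam →+ P :=
  AddCon.lift _ (FreeAbelianGroup.lift fun p => φ p.1 p.2)
    (AddCon.addConGen_le.mpr (by
      rintro x y h
      cases h with
      | addl m m' n => simp [AddCon.ker_rel, FreeAbelianGroup.lift_apply_of, h1]
      | addr m n n' => simp [AddCon.ker_rel, FreeAbelianGroup.lift_apply_of, h2]
      | bal r m n => simp [AddCon.ker_rel, FreeAbelianGroup.lift_apply_of, h3]))

@[simp] lemma lift_mk (φ : M → N → P) (h1 h2 h3) (m : M) (n : N) :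
    lift rho lam φ h1 h2 h3 (mk rho lam m n) = φ m n := by
  show (addConGen (BTRel rho lam)).lift _ _ ((FreeAbelianGroup.of (m, n) :
    FreeAbelianGroup (M × N)) : (addConGen (BTRel rho lam)).Quotient) = _
  rw [AddCon.lift_coe, FreeAbelianGroup.lift_apply_of]

/-- Induction principle for the balanced tensor product. -/
protected lemma ind {motive : BT rho lam → Prop} (zero : motive 0)
    (mk' : ∀ m n, motive (mk rho lam m n)) (neg : ∀ x, motive x → motive (-x))
    (add : ∀ x y, motive x → motive y → motive (x + y)) : ∀ x : BT rho lam, motive x := by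
  intro x
  refine AddCon.induction_on x fun z => ?_
  induction z using FreeAbelianGroup.induction_on with
  | zero => exact zero
  | of p => exact mk' p.1 p.2
  | neg p h =>
      have : ((-FreeAbelianGroup.of p : FreeAbelianGroup (M × N)) :
          (addConGen (BTRel rho lam)).Quotient) = -(mk rho lam p.1 p.2) := rfl
      rw [this]; exact neg _ (mk' p.1 p.2)
  | add x y hx hy =>
      have : ((x + y : FreeAbelianGroup (M × N)) :
          (addConGen (BTRel rho lam)).Quotient) = (x : _) + (y : _) := rfl
      rw [this]; exact add _ _ hx hy

lemma hom_ext {f g : BT rho lam →+ P}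
    (h : ∀ m n, f (mk rho lam m n) = g (mk rho lam m n)) : f = g := by
  ext x
  refine BT.ind (motive := fun x => f x = g x) ?_ ?_ ?_ ?_ x
  · simp
  · exact h
  · intro y hy; simp [hy]
  · intro y z hy hz; simp [hy, hz]

end BT

end BTCore

section Tensor

variable {B A C P : Type*} [Ring B] [Ring A] [Ring C] [AddCommGroup P]

/-- The tensor product `A ⊗_B A` relative to a ring homomorphism `g : B →+* A`. -/
def Tsr (g : B →+* A) : Type _ :=
  BT (fun b => AddMonoidHom.mulRight (g b)) (fun b => AddMonoidHom.mulLeft (g b))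

instance (g : B →+* A) : AddCommGroup (Tsr g) := inferInstanceAs (AddCommGroup (BT _ _))

namespace Tsr

variable (g : B →+* A)

/-- The generator `x ⊗_B y` of `Tsr g`. -/
def tmk (x y : A) : Tsr g := BT.mk _ _ x y

lemma tmk_add_left (x x' y : A) : tmk g (x + x') y = tmk g x y + tmk g x' y :=
  BT.mk_add_left x x' y

lemma tmk_add_right (x y y' : A) : tmk g x (y + y') = tmk g x y + tmk g x y' :=
  BT.mk_add_right x y y'

lemma tmk_bal (x : A) (b : B) (y : A) : tmk g (x * g b) y = tmk g x (g b * y) :=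
  BT.mk_bal b x y

/-- Lift a biadditive `B`-balanced map `A × A → P` to `Tsr g`. -/
def tlift (φ : A → A → P)
    (h1 : ∀ x x' y, φ (x + x') y = φ x y + φ x' y)
    (h2 : ∀ x y y', φ x (y + y') = φ x y + φ x y')
    (h3 : ∀ x b y, φ (x * g b) y = φ x (g b * y)) : Tsr g →+ P :=
  BT.lift _ _ φ h1 h2 (fun r m n => h3 m r n)

@[simp] lemma tlift_mk (φ : A → A → P) (h1 h2 h3) (x y : A) :
    tlift g φ h1 h2 h3 (tmk g x y) = φ x y :=
  BT.lift_mk φ h1 h2 _ x y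

lemma thom_ext {g : B →+* A} {f f' : Tsr g →+ P}
    (h : ∀ x y, f (tmk g x y) = f' (tmk g x y)) : f = f' :=
  BT.hom_ext h

/-- Left multiplication by `a ∈ A` on the first tensorand. -/
def lmul (a : A) : Tsr g →+ Tsr g :=
  tlift g (fun x y => tmk g (a * x) y)
    (fun x x' y => by rw [mul_add, tmk_add_left])
    (fun x y y' => by rw [tmk_add_right])
    (fun x b y => by rw [← mul_assoc, tmk_bal])

@[simp] lemma lmul_mk (a x y : A) : lmul g a (tmk g x y) = tmk g (a * x) y :=
  tlift_mk g _ _ _ _ x y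

/-- Right multiplication by `a ∈ A` on the second tensorand. -/
def rmul (a : A) : Tsr g →+ Tsr g :=
  tlift g (fun x y => tmk g x (y * a))
    (fun x x' y => by rw [tmk_add_left])
    (fun x y y' => by rw [add_mul, tmk_add_right])
    (fun x b y => by rw [tmk_bal, mul_assoc])

@[simp] lemma rmul_mk (a x y : A) : rmul g a (tmk g x y) = tmk g x (y * a) :=
  tlift_mk g _ _ _ _ x y

lemma lmul_lmul (a a' : A) (p : Tsr g) : lmul g a (lmul g a' p) = lmul g (a * a') p := by
  have : ((lmul g a).comp (lmul g a')) = lmul g (a * a') :=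
    thom_ext fun x y => by simp [mul_assoc]
  exact DFunLike.congr_fun this p

lemma rmul_rmul (a a' : A) (p : Tsr g) : rmul g a (rmul g a' p) = rmul g (a' * a) p := by
  have : ((rmul g a).comp (rmul g a')) = rmul g (a' * a) :=
    thom_ext fun x y => by simp [mul_assoc]
  exact DFunLike.congr_fun this p

lemma lmul_rmul (a a' : A) (p : Tsr g) : lmul g a (rmul g a' p) = rmul g a' (lmul g a p) := by
  have : ((lmul g a).comp (rmul g a')) = (rmul g a').comp (lmul g a) :=
    thom_ext fun x y => by simp
  exact DFunLike.congr_fun this p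

lemma lmul_add_smul (a a' : A) (p : Tsr g) :
    lmul g (a + a') p = lmul g a p + lmul g a' p := by
  have : lmul g (a + a') = lmul g a + lmul g a' :=
    thom_ext fun x y => by simp [add_mul, tmk_add_left]
  rw [this]; rfl

lemma rmul_add_smul (a a' : A) (p : Tsr g) :
    rmul g (a + a') p = rmul g a p + rmul g a' p := by
  have : rmul g (a + a') = rmul g a + rmul g a' :=
    thom_ext fun x y => by simp [mul_add, tmk_add_right]
  rw [this]; rfl

/-- The multiplication map `μ : A ⊗_B A → A`. -/
def mulmap : Tsr g →+ A :=
  tlift g (fun x y => x * y) (fun x x' y => by rw [add_mul])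
    (fun x y y' => by rw [mul_add]) (fun x b y => by rw [mul_assoc])

@[simp] lemma mulmap_mk (x y : A) : mulmap g (tmk g x y) = x * y := tlift_mk g _ _ _ _ x y

end Tsr

section TowerDefs

open Tsr

variable (g : B →+* A) (hC : C →+* A)

/-- `p ∈ (A ⊗_B A)^C` : the `C`-centralizer condition, where `C` maps to `A` via `hC`. -/
def TCent (p : Tsr g) : Prop := ∀ c : C, lmul g (hC c) p = rmul g (hC c) p

/-- `α ∈ End_B A_C` : additive endomorphisms of `A` that are left `B`-linear
(via `g`) and right `C`-linear (via `hC`). -/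
def EndBAC (α : A →+ A) : Prop :=
  (∀ (b : B) (x : A), α (g b * x) = g b * α x) ∧
  ∀ (x : A) (c : C), α (x * hC c) = α x * hC c

/-- The tower is right depth three: `A ⊗_B A` is isomorphic, as `A`-`C`-bimodules,
to a direct summand of `A^n` for some `n`. Here the left `A`-action and right
`C`-action on `A^n` are componentwise, and on `Tsr g` they are `lmul` and `rmul`. -/
def IsRightD3 : Prop :=
  ∃ (n : ℕ) (π : (Fin n → A) →+ Tsr g) (σ : Tsr g →+ (Fin n → A)),
    (∀ (a : A) (v : Fin n → A), π (fun i => a * v i) = lmul g a (π v)) ∧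
    (∀ (c : C) (v : Fin n → A), π (fun i => v i * hC c) = rmul g (hC c) (π v)) ∧
    (∀ (a : A) (p : Tsr g) (i : Fin n), σ (lmul g a p) i = a * σ p i) ∧
    (∀ (c : C) (p : Tsr g) (i : Fin n), σ (rmul g (hC c) p) i = σ p i * hC c) ∧
    (∀ p : Tsr g, π (σ p) = p)

end TowerDefs

end Tensor

open Tsr
section Extra

open Tsr

variable {C B A : Type*} [Ring C] [Ring B] [Ring A] (f : C →+* B) (g : B →+* A)

/-- For `γ` left `B`-linear, the map `A ⊗_B A → A`, `p = p¹ ⊗ p² ↦ p¹ * γ p²`. -/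
def phiMap (γ : A →+ A)
    (hγ : ∀ (b : B) (x : A), γ (g b * x) = g b * γ x) : Tsr g →+ A :=
  tlift g (fun x y => x * γ y)
    (fun x x' y => by rw [add_mul])
    (fun x y y' => by rw [map_add, mul_add])
    (fun x b y => by rw [hγ, mul_assoc])

/-- The centralizer `V = A^C` of the image of `C` in `A`. -/
def Vc : Subring A := Subring.centralizer (Set.range ⇑(g.comp f))

lemma Vc_comm {v : A} (hv : v ∈ Vc f g) (c : C) :
    (g.comp f) c * v = v * (g.comp f) c :=
  Subring.mem_centralizer_iff.mp hv _ ⟨c, rfl⟩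

/-- `P = (A ⊗_B A)^C` as an additive subgroup of `A ⊗_B A`. -/
def PCsub : AddSubgroup (Tsr g) where
  carrier := {p | TCent g (g.comp f) p}
  add_mem' := fun hp hq c => by simp only [map_add, hp c, hq c]
  zero_mem' := fun c => by simp
  neg_mem' := fun hp c => by simp only [map_neg, hp c]

lemma cent_lmul {v : A} (hv : ∀ c : C, (g.comp f) c * v = v * (g.comp f) c)
    {p : Tsr g} (hp : TCent g (g.comp f) p) :
    TCent g (g.comp f) (lmul g v p) := fun c => by
  rw [lmul_lmul, hv c, ← lmul_lmul, hp c, lmul_rmul]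

lemma cent_rmul {v : A} (hv : ∀ c : C, (g.comp f) c * v = v * (g.comp f) c)
    {p : Tsr g} (hp : TCent g (g.comp f) p) :
    TCent g (g.comp f) (rmul g v p) := fun c => by
  rw [lmul_rmul, hp c, rmul_rmul, hv c, ← rmul_rmul]

/-- The left action of `v ∈ V` on `P = (A ⊗_B A)^C`. -/
def smulL (v : Vc f g) : ↥(PCsub f g) →+ ↥(PCsub f g) :=
  AddMonoidHom.mk' (fun p => ⟨lmul g (v : A) p.1, cent_lmul f g (Vc_comm f g v.2) p.2⟩)
    (fun p q => Subtype.ext (by simp))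

/-- The right action of `v ∈ V` on `P = (A ⊗_B A)^C`. -/
def smulR (v : Vc f g) : ↥(PCsub f g) →+ ↥(PCsub f g) :=
  AddMonoidHom.mk' (fun p => ⟨rmul g (v : A) p.1, cent_rmul f g (Vc_comm f g v.2) p.2⟩)
    (fun p q => Subtype.ext (by simp))

end Extra

section Kap

open Tsr

variable {C B A : Type*} [Ring C] [Ring B] [Ring A] (f : C →+* B) (g : B →+* A)

/-- The tensor product `A ⊗_V P`, where `V = A^C` and `P = (A ⊗_B A)^C`. -/
abbrev AVP (f : C →+* B) (g : B →+* A) : Type _ :=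
  BT (fun v : Vc f g => AddMonoidHom.mulRight (v : A)) (fun v : Vc f g => smulL f g v)

/-- The canonical map `A ⊗_V P → A ⊗_B A`, `a ⊗ p ↦ a p¹ ⊗ p²`. -/
def kap : AVP f g →+ Tsr g :=
  BT.lift _ _ (fun a p => lmul g a p.1)
    (fun a a' p => by rw [lmul_add_smul])
    (fun a p p' => by rw [AddSubgroup.coe_add, map_add])
    (fun v a p => by
      dsimp only [AddMonoidHom.mulRight_apply]
      rw [← lmul_lmul]
      rfl)

/-- The left `A`-action on `A ⊗_V P`. -/
def laA (a : A) : AVP f g →+ AVP f g :=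
  BT.lift _ _ (fun a' p => BT.mk _ _ (a * a') p)
    (fun a' a'' p => by rw [mul_add, BT.mk_add_left])
    (fun a' p p' => by rw [BT.mk_add_right])
    (fun v a' p => by
      rw [show a * (AddMonoidHom.mulRight (v : A)) a' = (a * a') * (v : A) by
        simp [mul_assoc]]
      exact BT.mk_bal v (a * a') p)

/-- The right `C`-action on `A ⊗_V P`, `(a ⊗ p) · c = a (gf c) ⊗ p`. -/
def rcA (c : C) : AVP f g →+ AVP f g :=
  BT.lift _ _ (fun a p => BT.mk _ _ (a * (g.comp f) c) p)
    (fun a a' p => by rw [add_mul, BT.mk_add_left])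
    (fun a p p' => by rw [BT.mk_add_right])
    (fun v a p => by
      rw [show (AddMonoidHom.mulRight (v : A)) a * (g.comp f) c
            = (a * (g.comp f) c) * (v : A) by
        simp only [AddMonoidHom.mulRight_apply, mul_assoc]
        rw [← Vc_comm f g v.2 c]]
      exact BT.mk_bal v (a * (g.comp f) c) p)

end Kap


section Aux14

open Tsr

variable {C B A : Type*} [Ring C] [Ring B] [Ring A] (f : C →+* B) (g : B →+* A)

lemma kap_mk (a : A) (p : ↥(PCsub f g)) :
    kap f g (BT.mk _ _ a p) = lmul g a (p : Tsr g) := BT.lift_mk _ _ _ _ a p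

lemma laA_mk (a a' : A) (p : ↥(PCsub f g)) :
    laA f g a (BT.mk _ _ a' p) = BT.mk _ _ (a * a') p := BT.lift_mk _ _ _ _ a' p

lemma rcA_mk (c : C) (a : A) (p : ↥(PCsub f g)) :
    rcA f g c (BT.mk _ _ a p) = BT.mk _ _ (a * (g.comp f) c) p := BT.lift_mk _ _ _ _ a p

lemma kap_laA (a : A) (q : AVP f g) :
    kap f g (laA f g a q) = lmul g a (kap f g q) := by
  have h : (kap f g).comp (laA f g a) = (lmul g a).comp (kap f g) :=
    BT.hom_ext fun a' p => by
      simp only [AddMonoidHom.comp_apply, laA_mk, kap_mk, lmul_lmul]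
  exact DFunLike.congr_fun h q

lemma kap_rcA (c : C) (q : AVP f g) :
    kap f g (rcA f g c q) = rmul g ((g.comp f) c) (kap f g q) := by
  have h : (kap f g).comp (rcA f g c) = (rmul g ((g.comp f) c)).comp (kap f g) :=
    BT.hom_ext fun a p => by
      simp only [AddMonoidHom.comp_apply, rcA_mk, kap_mk]
      rw [← lmul_lmul, p.2 c, lmul_rmul]
  exact DFunLike.congr_fun h q

/-- `p ↦ a ⊗ p` as an additive hom into `A ⊗_V P`. -/
def mkHom (a : A) : ↥(PCsub f g) →+ AVP f g :=
  AddMonoidHom.mk' (fun p => BT.mk _ _ a p) (fun p q => BT.mk_add_right a p q)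

@[simp] lemma mkHom_apply (a : A) (p : ↥(PCsub f g)) :
    mkHom f g a p = BT.mk _ _ a p := rfl

end Aux14

/-- A tower of rings `A|B|C` is right depth three if and only if
`P = (A ⊗_B A)^C` is finitely generated projective as a left module over
`V = A^C` and the map `A ⊗_V P → A ⊗_B A`, `a ⊗ p ↦ a p¹ ⊗ p²`, is an
isomorphism of `A`-`C`-bimodules. -/
theorem isRightD3_iff_preGalois {C B A : Type*} [Ring C] [Ring B] [Ring A]
    (f : C →+* B) (g : B →+* A) :
    IsRightD3 g (g.comp f) ↔
      ((∃ (n : ℕ) (θ : Fin n → (↥(PCsub f g) →+ A)) (w : Fin n → ↥(PCsub f g)),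
          (∀ (i : Fin n) (p : ↥(PCsub f g)), θ i p ∈ Vc f g) ∧
          (∀ (i : Fin n) (v : Vc f g) (p : ↥(PCsub f g)),
              θ i (smulL f g v p) = (v : A) * θ i p) ∧
          (∀ p : ↥(PCsub f g), (p : Tsr g) = ∑ i, lmul g (θ i p) (w i : Tsr g))) ∧
       Function.Bijective ⇑(kap f g) ∧
       (∀ (a : A) (q : AVP f g), kap f g (laA f g a q) = lmul g a (kap f g q)) ∧
       (∀ (c : C) (q : AVP f g),
          kap f g (rcA f g c q) = rmul g ((g.comp f) c) (kap f g q))) := by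
  constructor
  · rintro ⟨n, π, σ, hπA, hπC, hσA, hσC, hπσ⟩
    classical
    set es : Fin n → Fin n → A := fun i j => if j = i then 1 else 0 with hes_def
    set u : Fin n → Tsr g := fun i => π (es i) with hu_def
    have hrec : ∀ v : Fin n → A, π v = ∑ i, lmul g (v i) (u i) := by
      intro v
      have hv : v = ∑ i, (fun j => v i * es i j) := by
        funext j
        simp [hes_def, mul_ite, Finset.sum_ite_eq]
      have h1 : π v = ∑ i, π (fun j => v i * es i j) := by
        conv_lhs => rw [hv]
        exact map_sum π _ _
      rw [h1]
      exact Finset.sum_congr rfl fun i _ => hπA (v i) (es i)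
    have hucent : ∀ i, u i ∈ PCsub f g := by
      intro i
      show TCent g (g.comp f) (u i)
      intro c
      have h1 : lmul g ((g.comp f) c) (u i)
          = π (fun j => (g.comp f) c * es i j) := (hπA _ _).symm
      have h2 : rmul g ((g.comp f) c) (u i)
          = π (fun j => es i j * (g.comp f) c) := (hπC _ _).symm
      rw [h1, h2]
      congr 1
      funext j
      by_cases h : j = i <;> simp [hes_def, h]
    set w : Fin n → ↥(PCsub f g) := fun i => ⟨u i, hucent i⟩ with hw_def
    set θ : Fin n → (↥(PCsub f g) →+ A) := fun i =>
      AddMonoidHom.mk' (fun p => σ (p : Tsr g) i)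
        (fun p q => by simp) with hθ_def
    have hθV : ∀ (i : Fin n) (p : ↥(PCsub f g)), θ i p ∈ Vc f g := by
      intro i p
      refine Subring.mem_centralizer_iff.mpr ?_
      rintro _ ⟨c, rfl⟩
      have h := congrArg (fun t => σ t i) (p.2 c)
      simp only [hσA, hσC] at h
      exact h
    have hθlin : ∀ (i : Fin n) (v : Vc f g) (p : ↥(PCsub f g)),
        θ i (smulL f g v p) = (v : A) * θ i p := fun i v p => hσA (v : A) (p : Tsr g) i
    have hdual : ∀ p : ↥(PCsub f g), (p : Tsr g) = ∑ i, lmul g (θ i p) ((w i : Tsr g)) := by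
      intro p
      have h := hrec (σ (p : Tsr g))
      rw [hπσ] at h
      exact h
    -- the inverse of kap
    set β : Tsr g →+ AVP f g := AddMonoidHom.mk'
      (fun q => ∑ i, BT.mk _ _ (σ q i) (w i))
      (fun q q' => by
        simp only [map_add, Pi.add_apply]
        rw [← Finset.sum_add_distrib]
        exact Finset.sum_congr rfl fun i _ => BT.mk_add_left _ _ _) with hβ_def
    have hβ_apply : ∀ q : Tsr g, β q = ∑ i, BT.mk _ _ (σ q i) (w i) := fun q => rfl
    have hkapβ : ∀ q : Tsr g, kap f g (β q) = q := by
      intro q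
      have h1 : kap f g (β q) = ∑ i, lmul g (σ q i) (u i) := by
        rw [hβ_apply, map_sum]
        exact Finset.sum_congr rfl fun i _ => kap_mk f g _ _
      rw [h1, ← hrec, hπσ]
    have hβkap : ∀ q : AVP f g, β (kap f g q) = q := by
      have h : β.comp (kap f g) = AddMonoidHom.id _ :=
        BT.hom_ext fun a p => by
          simp only [AddMonoidHom.comp_apply, AddMonoidHom.id_apply, kap_mk]
          rw [hβ_apply]
          have hstep : ∀ i : Fin n, BT.mk (fun v : Vc f g => AddMonoidHom.mulRight (v : A))
              (fun v => smulL f g v) (σ (lmul g a (p : Tsr g)) i) (w i)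
              = mkHom f g a (smulL f g ⟨σ (p : Tsr g) i, hθV i p⟩ (w i)) := by
            intro i
            rw [hσA]
            exact BT.mk_bal (⟨σ (p : Tsr g) i, hθV i p⟩ : Vc f g) a (w i)
          rw [Finset.sum_congr rfl fun i _ => hstep i, ← map_sum (mkHom f g a)]
          have hsum : (∑ i, smulL f g (⟨σ (p : Tsr g) i, hθV i p⟩ : Vc f g) (w i)) = p := by
            apply Subtype.ext
            have hc := map_sum ((PCsub f g).subtype)
              (fun i => smulL f g (⟨σ (p : Tsr g) i, hθV i p⟩ : Vc f g) (w i)) Finset.univ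
            simp only [AddSubgroup.coe_subtype] at hc
            rw [hc]
            have h2 : ∀ i : Fin n,
                ((smulL f g (⟨σ (p : Tsr g) i, hθV i p⟩ : Vc f g) (w i) : ↥(PCsub f g)) : Tsr g)
                  = lmul g (σ (p : Tsr g) i) (u i) := fun i => rfl
            rw [Finset.sum_congr rfl fun i _ => h2 i, ← hrec, hπσ]
          rw [hsum]
          rfl
      exact fun q => DFunLike.congr_fun h q
    refine ⟨⟨n, θ, w, hθV, hθlin, hdual⟩, ?_, kap_laA f g, kap_rcA f g⟩
    exact Function.bijective_iff_has_inverse.mpr ⟨β, hβkap, hkapβ⟩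
  · rintro ⟨⟨n, θ, w, hθV, hθlin, hdual⟩, hbij, -, -⟩
    set e : AVP f g ≃+ Tsr g := AddEquiv.ofBijective (kap f g) hbij with he_def
    have he : ∀ q : AVP f g, e q = kap f g q := fun q => rfl
    set π : (Fin n → A) →+ Tsr g := AddMonoidHom.mk'
      (fun v => ∑ i, lmul g (v i) ((w i : Tsr g)))
      (fun v v' => by
        rw [← Finset.sum_add_distrib]
        exact Finset.sum_congr rfl fun i _ => by rw [Pi.add_apply, lmul_add_smul]) with hπ_def
    set τ : AVP f g →+ (Fin n → A) := BT.lift _ _ (fun a p => fun i => a * θ i p)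
      (fun a a' p => funext fun i => by
        simp only [Pi.add_apply]; rw [add_mul])
      (fun a p p' => funext fun i => by
        simp only [Pi.add_apply]; rw [map_add, mul_add])
      (fun v a p => funext fun i => by
        simp only [AddMonoidHom.mulRight_apply]
        rw [hθlin, mul_assoc]) with hτ_def
    have hτ_mk : ∀ (a : A) (p : ↥(PCsub f g)),
        τ (BT.mk _ _ a p) = fun i => a * θ i p := fun a p => BT.lift_mk _ _ _ _ a p
    set σ : Tsr g →+ (Fin n → A) := τ.comp e.symm.toAddMonoidHom with hσ_def
    have hσ_apply : ∀ q : Tsr g, σ q = τ (e.symm q) := fun q => rfl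
    have hπτ : ∀ q : AVP f g, π (τ q) = kap f g q := by
      have h : π.comp τ = kap f g := BT.hom_ext fun a p => by
        simp only [AddMonoidHom.comp_apply, kap_mk, hτ_mk]
        show ∑ i, lmul g (a * θ i p) ((w i : Tsr g)) = lmul g a (p : Tsr g)
        rw [hdual p, map_sum (lmul g a)]
        exact Finset.sum_congr rfl fun i _ => (lmul_lmul g a (θ i p) _).symm
      exact fun q => DFunLike.congr_fun h q
    have hsymm_la : ∀ (a : A) (p : Tsr g),
        e.symm (lmul g a p) = laA f g a (e.symm p) := by
      intro a p
      rw [AddEquiv.symm_apply_eq, he, kap_laA, ← he, e.apply_symm_apply]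
    have hsymm_rc : ∀ (c : C) (p : Tsr g),
        e.symm (rmul g ((g.comp f) c) p) = rcA f g c (e.symm p) := by
      intro c p
      rw [AddEquiv.symm_apply_eq, he, kap_rcA, ← he, e.apply_symm_apply]
    have hτla : ∀ (a : A) (q : AVP f g) (i : Fin n), τ (laA f g a q) i = a * τ q i := by
      intro a q i
      have h : τ.comp (laA f g a)
          = (AddMonoidHom.mk' (fun v : Fin n → A => fun i => a * v i)
              (fun v v' => funext fun i => by simp [mul_add])).comp τ :=
        BT.hom_ext fun a' p => by
          simp only [AddMonoidHom.comp_apply, laA_mk, hτ_mk]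
          funext i
          show (a * a') * θ i p = a * (a' * θ i p)
          rw [mul_assoc]
      have := DFunLike.congr_fun h q
      exact congrFun this i
    have hτrc : ∀ (c : C) (q : AVP f g) (i : Fin n),
        τ (rcA f g c q) i = τ q i * (g.comp f) c := by
      intro c q i
      have h : τ.comp (rcA f g c)
          = (AddMonoidHom.mk' (fun v : Fin n → A => fun i => v i * (g.comp f) c)
              (fun v v' => funext fun i => by simp [add_mul])).comp τ :=
        BT.hom_ext fun a p => by
          simp only [AddMonoidHom.comp_apply, rcA_mk, hτ_mk]
          funext i
          show (a * (g.comp f) c) * θ i p = (a * θ i p) * (g.comp f) c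
          rw [mul_assoc, Vc_comm f g (hθV i p) c, ← mul_assoc]
      have := DFunLike.congr_fun h q
      exact congrFun this i
    refine ⟨n, π, σ, ?_, ?_, ?_, ?_, ?_⟩
    · intro a v
      show ∑ i, lmul g (a * v i) ((w i : Tsr g)) = lmul g a (∑ i, lmul g (v i) ((w i : Tsr g)))
      rw [map_sum (lmul g a)]
      exact Finset.sum_congr rfl fun i _ => (lmul_lmul g a (v i) _).symm
    · intro c v
      show ∑ i, lmul g (v i * (g.comp f) c) ((w i : Tsr g))
        = rmul g ((g.comp f) c) (∑ i, lmul g (v i) ((w i : Tsr g)))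
      rw [map_sum (rmul g ((g.comp f) c))]
      refine Finset.sum_congr rfl fun i _ => ?_
      rw [← lmul_lmul, (w i).2 c, lmul_rmul]
    · intro a p i
      rw [hσ_apply, hσ_apply, hsymm_la, hτla]
    · intro c p i
      rw [hσ_apply, hσ_apply, hsymm_rc, hτrc]
    · intro p
      rw [hσ_apply, hπτ, ← he, e.apply_symm_apply]
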